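/- Let U be an ℓ×ℓ complex unitary matrix with spectral decomposition U = Σ_{r=1}^m λ_r F_r, and let M̂ = Σ_r F_r ∘ conj(F_r) be its average mixing matrix. Then trace(M̂) ≥ 1. -/

import Mathlib

open Matrix Finset

/-- The average mixing matrix `M̂ = ∑ r, F_r ∘ conj(F_r)` of a quantum walk with
spectral idempotents `F_r`, where `∘` is the entrywise (Hadamard) product and
`conj` is entrywise complex conjugation. -/
noncomputable def avgMix {ℓ m : ℕ} (F : Fin m → Matrix (Fin ℓ) (Fin ℓ) ℂ) :
    Matrix (Fin ℓ) (Fin ℓ) ℂ :=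
  ∑ r, Matrix.hadamard (F r) ((F r).map (starRingEnd ℂ))

/-- trace(M̂) ≥ 1. -/
theorem avgMix_trace_ge_one (ℓ m : ℕ) (hℓ : 0 < ℓ)
    (U : Matrix (Fin ℓ) (Fin ℓ) ℂ)
    (hU : U ∈ Matrix.unitaryGroup (Fin ℓ) ℂ)
    (lam : Fin m → ℂ) (F : Fin m → Matrix (Fin ℓ) (Fin ℓ) ℂ)
    (hdist : Function.Injective lam)
    (hmod : ∀ r, ‖lam r‖ = 1)
    (hherm : ∀ r, (F r)ᴴ = F r)
    (hidem : ∀ r, F r * F r = F r)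
    (horth : ∀ r s, r ≠ s → F r * F s = 0)
    (hsum : ∑ r, F r = 1)
    (hspec : U = ∑ r, lam r • F r)
    :
    1 ≤ (avgMix F).trace.re := by
  classical
  -- d r i : the (real, nonnegative) diagonal entries
  set d : Fin m → Fin ℓ → ℝ := fun r i => (F r i i).re with hd
  -- F r = F r * (F r)ᴴ
  have hFF : ∀ r, F r = F r * (F r)ᴴ := by
    intro r; rw [hherm r]; exact (hidem r).symm
  -- diagonal entries as sums of normSq over a row
  have hdiag : ∀ r i, d r i = ∑ k, Complex.normSq (F r i k) := by
    intro r i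
    have h := congrArg (fun M : Matrix (Fin ℓ) (Fin ℓ) ℂ => (M i i).re) (hFF r)
    simp only [Matrix.mul_apply, Matrix.conjTranspose_apply, Complex.re_sum] at h
    simpa [hd, Complex.mul_conj, mul_comm] using h
  have hdnonneg : ∀ r i, 0 ≤ d r i := by
    intro r i; rw [hdiag r i]
    exact Finset.sum_nonneg fun k _ => Complex.normSq_nonneg _
  -- off-diagonal bound : |F r i j|² ≤ d r i * d r j
  have hoff : ∀ r i j, Complex.normSq (F r i j) ≤ d r i * d r j := by
    intro r i j
    have hentry : F r i j = ∑ k, F r i k * (starRingEnd ℂ) (F r j k) := by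
      conv_lhs => rw [hFF r]
      simp [Matrix.mul_apply, Matrix.conjTranspose_apply]
    have habs : ‖F r i j‖ ≤
        ∑ k, ‖F r i k‖ * ‖F r j k‖ := by
      rw [hentry]
      refine (norm_sum_le _ _).trans_eq ?_
      simp [_root_.map_mul]
    have hCS : (∑ k, ‖F r i k‖ * ‖F r j k‖) ^ 2 ≤
        (∑ k, ‖F r i k‖ ^ 2) * (∑ k, ‖F r j k‖ ^ 2) :=
      Finset.sum_mul_sq_le_sq_mul_sq _ _ _
    have h1 : Complex.normSq (F r i j) ≤
        (∑ k, ‖F r i k‖ * ‖F r j k‖) ^ 2 := by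
      rw [← Complex.sq_norm]
      exact pow_le_pow_left₀ (norm_nonneg _) habs 2
    refine h1.trans (hCS.trans_eq ?_)
    rw [hdiag r i, hdiag r j]
    simp [Complex.sq_norm]
  -- total trace of each F r
  set t : Fin m → ℝ := fun r => ∑ i, d r i with ht
  have htnonneg : ∀ r, 0 ≤ t r := fun r => Finset.sum_nonneg fun i _ => hdnonneg r i
  -- t r ≤ (t r)^2
  have htsq : ∀ r, t r ≤ t r ^ 2 := by
    intro r
    have h1 : t r = ∑ i, ∑ k, Complex.normSq (F r i k) := by
      simp [ht, hdiag]
    have h2 : (∑ i, ∑ k, Complex.normSq (F r i k)) ≤ ∑ i, ∑ k, d r i * d r k := by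
      refine Finset.sum_le_sum fun i _ => Finset.sum_le_sum fun k _ => hoff r i k
    have h3 : t r ^ 2 = ∑ i, ∑ k, d r i * d r k := by
      rw [sq, Finset.sum_mul]
      exact Finset.sum_congr rfl fun i _ => Finset.mul_sum _ _ _
    calc t r = ∑ i, ∑ k, Complex.normSq (F r i k) := h1
      _ ≤ ∑ i, ∑ k, d r i * d r k := h2
      _ = t r ^ 2 := h3.symm
  -- sum of all t r is ℓ
  have hsumt : ∑ r, t r = (ℓ : ℝ) := by
    have h : ∑ r, (F r).trace = (ℓ : ℂ) := by
      rw [← Matrix.trace_sum, hsum, Matrix.trace_one]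
      simp
    have h2 := congrArg Complex.re h
    rw [Complex.re_sum] at h2
    calc ∑ r, t r = ∑ r, ((F r).trace).re := by
          refine Finset.sum_congr rfl fun r _ => ?_
          simp [ht, hd, Matrix.trace, Matrix.diag, Complex.re_sum]
      _ = (ℓ : ℝ) := by rw [h2]; simp
  -- trace of avgMix
  have htr : (avgMix F).trace.re = ∑ r, ∑ i, (d r i) ^ 2 := by
    rw [avgMix, Matrix.trace_sum, Complex.re_sum]
    refine Finset.sum_congr rfl fun r _ => ?_
    rw [Matrix.trace, Complex.re_sum]
    refine Finset.sum_congr rfl fun i _ => ?_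
    have him : (F r i i).im = 0 := by
      have h := congrArg (fun M : Matrix (Fin ℓ) (Fin ℓ) ℂ => (M i i).im) (hFF r)
      simp only [Matrix.mul_apply, Matrix.conjTranspose_apply, Complex.im_sum] at h
      simpa [Complex.mul_conj, mul_comm] using h
    simp [Matrix.diag, Matrix.hadamard_apply, Matrix.map_apply, Complex.mul_conj,
      Complex.normSq_apply, him, hd, sq]
  rw [htr]
  -- per r Cauchy–Schwarz then combine
  have hper : ∀ r, t r / (ℓ : ℝ) ≤ ∑ i, (d r i) ^ 2 := by
    intro r
    have hCS : (t r) ^ 2 ≤ (ℓ : ℝ) * ∑ i, (d r i) ^ 2 := by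
      have := sq_sum_le_card_mul_sum_sq (s := Finset.univ) (f := d r)
      simpa [ht] using this
    have hl : (0 : ℝ) < ℓ := Nat.cast_pos.mpr hℓ
    rw [div_le_iff₀ hl]
    calc t r ≤ t r ^ 2 := htsq r
      _ ≤ (ℓ : ℝ) * ∑ i, (d r i) ^ 2 := hCS
      _ = (∑ i, (d r i) ^ 2) * ℓ := mul_comm _ _
  calc (1 : ℝ) = (∑ r, t r) / ℓ := by
        rw [hsumt]; field_simp
    _ = ∑ r, t r / ℓ := Finset.sum_div _ _ _
    _ ≤ ∑ r, ∑ i, (d r i) ^ 2 := Finset.sum_le_sum fun r _ => hper r
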